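/- arXiv:0806.2984 — 2 statements merged into one kernel-verified Lean document; each statement's English description precedes it below -/
import Mathlib

section
/- Let r, s > 0 be real numbers with rs > 1, set X = r p² + (pq + qp) + s q² and R = r^{1/2} p + r^{−1/2} q, viewed as operators on C_c^∞(ℝ,ℂ). Then for every u ∈ C_c^∞(ℝ,ℂ): ⟨u, X² u⟩ = (s − 1/r)² ⟨u, q⁴ u⟩ + 2(s − 1/r) ⟨u, q R² q u⟩ + ⟨u, R⁴ u⟩ − 2(rs − 1) ‖u‖². -/
open MeasureTheory Complex
open scoped ComplexOrder

noncomputable section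

/-- Operators acting on complex-valued functions on `ℝ`. -/
abbrev Op : Type := (ℝ → ℂ) → (ℝ → ℂ)

/-- The momentum operator `(p u)(x) = -i u'(x)`. -/
def pOp : Op := fun u x => -Complex.I * deriv u x

/-- The position operator `(q u)(x) = x * u(x)`. -/
def qOp : Op := fun u x => (x : ℂ) * u x

/-- Multiplication operator by a real-valued function. -/
def mulOp (f : ℝ → ℝ) : Op := fun u x => (f x : ℂ) * u x

/-- Commutator of two operators. -/
def opComm (A B : Op) : Op := fun u => A (B u) - B (A u)

/-- Anticommutator of two operators. -/
def opACom (A B : Op) : Op := fun u => A (B u) + B (A u)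

/-- The `L²(ℝ,ℂ)` inner product, antilinear in the first argument. -/
def ip (u v : ℝ → ℂ) : ℂ := ∫ x : ℝ, (starRingEnd ℂ) (u x) * v x

/-- `u ∈ C_c^∞(ℝ,ℂ)`: smooth and compactly supported. -/
def IsTest (u : ℝ → ℂ) : Prop := ContDiff ℝ (⊤ : ℕ∞) u ∧ HasCompactSupport u

/-- `X = r p² + (pq + qp) + s q²`. -/
def Xop (r s : ℝ) : Op := (r : ℂ) • (pOp ∘ pOp) + opACom pOp qOp + (s : ℂ) • (qOp ∘ qOp)

/-- `R = r^{1/2} p + r^{−1/2} q`. -/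
def Rop (r : ℝ) : Op := ((Real.sqrt r : ℝ) : ℂ) • pOp + (((Real.sqrt r)⁻¹ : ℝ) : ℂ) • qOp

-- basic
lemma pOp_apply (v : ℝ → ℂ) (x : ℝ) : pOp v x = -Complex.I * deriv v x := rfl
lemma qOp_apply (v : ℝ → ℂ) (x : ℝ) : qOp v x = (x:ℂ) * v x := rfl
lemma Rop_apply (r : ℝ) (v : ℝ → ℂ) (x : ℝ) :
    Rop r v x = ((Real.sqrt r : ℝ) : ℂ) * pOp v x + (((Real.sqrt r)⁻¹ : ℝ) : ℂ) * qOp v x := by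
  simp [Rop, smul_eq_mul]

lemma contDiff_pOp {v : ℝ → ℂ} (hv : ContDiff ℝ (⊤:ℕ∞) v) : ContDiff ℝ (⊤:ℕ∞) (pOp v) :=
  contDiff_const.mul (contDiff_infty_iff_deriv.mp hv).2

lemma contDiff_qOp {v : ℝ → ℂ} (hv : ContDiff ℝ (⊤:ℕ∞) v) : ContDiff ℝ (⊤:ℕ∞) (qOp v) :=
  Complex.ofRealCLM.contDiff.mul hv

lemma contDiff_Rop {v : ℝ → ℂ} (hv : ContDiff ℝ (⊤:ℕ∞) v) (r : ℝ) :
    ContDiff ℝ (⊤:ℕ∞) (Rop r v) := by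
  have : Rop r v = fun x => ((Real.sqrt r : ℝ) : ℂ) * pOp v x + (((Real.sqrt r)⁻¹ : ℝ) : ℂ) * qOp v x :=
    funext (Rop_apply r v)
  rw [this]
  exact (contDiff_const.mul (contDiff_pOp hv)).add (contDiff_const.mul (contDiff_qOp hv))

lemma pOp_add {v w : ℝ → ℂ} (hv : Differentiable ℝ v) (hw : Differentiable ℝ w) :
    pOp (v + w) = pOp v + pOp w := by
  funext x
  have : deriv (v + w) x = deriv v x + deriv w x := by
    rw [show (v + w) = fun y => v y + w y from rfl, deriv_fun_add (hv x) (hw x)]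
  simp [pOp, this]; ring

lemma pOp_smul (c : ℂ) (v : ℝ → ℂ) : pOp (c • v) = c • pOp v := by
  funext x
  simp only [pOp, Pi.smul_apply, smul_eq_mul]
  rw [show (c • v) = fun y => c * v y from rfl, deriv_const_mul_field]
  ring

lemma qOp_add (v w : ℝ → ℂ) : qOp (v + w) = qOp v + qOp w := by
  funext x; simp [qOp]; ring

lemma qOp_smul (c : ℂ) (v : ℝ → ℂ) : qOp (c • v) = c • qOp v := by
  funext x; simp [qOp]; ring

lemma Rop_add {v w : ℝ → ℂ} (hv : Differentiable ℝ v) (hw : Differentiable ℝ w) (r : ℝ) :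
    Rop r (v + w) = Rop r v + Rop r w := by
  funext x
  simp only [Rop_apply, pOp_add hv hw, qOp_add, Pi.add_apply]
  ring

lemma Rop_smul (c : ℂ) (v : ℝ → ℂ) (r : ℝ) : Rop r (c • v) = c • Rop r v := by
  funext x
  simp only [Rop_apply, pOp_smul, qOp_smul, Pi.smul_apply, smul_eq_mul]
  ring

lemma pq_comm {v : ℝ → ℂ} (hv : Differentiable ℝ v) :
    pOp (qOp v) = qOp (pOp v) + (-Complex.I) • v := by
  funext x
  have h1 : HasDerivAt (fun y : ℝ => (y:ℂ)) 1 x := by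
    simpa using (hasDerivAt_id x).ofReal_comp
  have hd : deriv (fun y : ℝ => (y:ℂ) * v y) x = v x + x * deriv v x := by
    simpa using (h1.fun_mul (hv x).hasDerivAt).deriv
  simp only [pOp, qOp, Pi.add_apply, Pi.smul_apply, smul_eq_mul]
  rw [show qOp v = fun y : ℝ => (y:ℂ) * v y from rfl, hd]
  ring

lemma diff_const_smul (c : ℂ) {v : ℝ → ℂ} (hv : Differentiable ℝ v) :
    Differentiable ℝ (c • v) := by
  have : c • v = fun y => c • v y := rfl
  rw [this]; exact hv.const_smul c

lemma Rq (r : ℝ) {v : ℝ → ℂ} (hv : Differentiable ℝ v) :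
    Rop r (qOp v) = qOp (Rop r v) + ((-Complex.I) * ((Real.sqrt r : ℝ) : ℂ)) • v := by
  have hpq := pq_comm hv
  funext x
  have := congrFun hpq x
  simp only [Rop_apply, Pi.add_apply, Pi.smul_apply, smul_eq_mul, qOp_apply] at *
  rw [this]
  ring

lemma R2q (r : ℝ) {v : ℝ → ℂ} (hv : ContDiff ℝ (⊤:ℕ∞) v) :
    Rop r (Rop r (qOp v)) =
      qOp (Rop r (Rop r v)) + (2 * ((-Complex.I) * ((Real.sqrt r : ℝ) : ℂ))) • Rop r v := by
  have hRv := contDiff_Rop hv r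
  have hd : Differentiable ℝ v := hv.differentiable (by simp)
  have hdR : Differentiable ℝ (Rop r v) := hRv.differentiable (by simp)
  rw [Rq r hd,
    Rop_add ((contDiff_qOp hRv).differentiable (by simp))
      (diff_const_smul _ hd) r,
    Rop_smul, Rq r hdR]
  funext x
  simp only [Pi.add_apply, Pi.smul_apply, smul_eq_mul]
  ring

lemma contDiff_const_smul' (c : ℂ) {v : ℝ → ℂ} (hv : ContDiff ℝ (⊤:ℕ∞) v) :
    ContDiff ℝ (⊤:ℕ∞) (c • v) := by
  have : c • v = fun y => c * v y := rfl
  rw [this]; exact contDiff_const.mul hv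

lemma contDiff_add' {v w : ℝ → ℂ} (hv : ContDiff ℝ (⊤:ℕ∞) v) (hw : ContDiff ℝ (⊤:ℕ∞) w) :
    ContDiff ℝ (⊤:ℕ∞) (v + w) := by
  have : v + w = fun y => v y + w y := rfl
  rw [this]; exact hv.add hw

lemma X_apply (r s : ℝ) (hr : 0 < r) {v : ℝ → ℂ} (hv : ContDiff ℝ (⊤:ℕ∞) v) :
    Xop r s v = Rop r (Rop r v) + ((s - 1/r : ℝ):ℂ) • qOp (qOp v) := by
  have hdv : Differentiable ℝ v := hv.differentiable (by simp)
  have hpv := contDiff_pOp hv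
  have hqv := contDiff_qOp hv
  have hdpv : Differentiable ℝ (pOp v) := hpv.differentiable (by simp)
  have hdqv : Differentiable ℝ (qOp v) := hqv.differentiable (by simp)
  have hpR : pOp (Rop r v) = ((Real.sqrt r : ℝ) : ℂ) • pOp (pOp v)
      + (((Real.sqrt r)⁻¹ : ℝ) : ℂ) • pOp (qOp v) := by
    rw [show Rop r v = ((Real.sqrt r : ℝ) : ℂ) • pOp v
        + (((Real.sqrt r)⁻¹ : ℝ) : ℂ) • qOp v from rfl,
      pOp_add (diff_const_smul _ hdpv) (diff_const_smul _ hdqv), pOp_smul, pOp_smul]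
  have htt : ((Real.sqrt r : ℝ) : ℂ) * ((Real.sqrt r : ℝ) : ℂ) = (r:ℂ) := by
    norm_cast; exact Real.mul_self_sqrt hr.le
  have htb : ((Real.sqrt r : ℝ) : ℂ) * (((Real.sqrt r)⁻¹ : ℝ) : ℂ) = 1 := by
    norm_cast
    exact mul_inv_cancel₀ (Real.sqrt_ne_zero'.mpr hr)
  have hr0 : (r:ℂ) ≠ 0 := by exact_mod_cast hr.ne'
  have hbb : (r:ℂ) * ((((Real.sqrt r)⁻¹ : ℝ) : ℂ) * (((Real.sqrt r)⁻¹ : ℝ) : ℂ)) = 1 := by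
    linear_combination (-((((Real.sqrt r)⁻¹ : ℝ) : ℂ) * (((Real.sqrt r)⁻¹ : ℝ) : ℂ)))*htt
      + (((Real.sqrt r : ℝ) : ℂ) * (((Real.sqrt r)⁻¹ : ℝ) : ℂ) + 1)*htb
  have hd : ((s - 1/r : ℝ):ℂ) = (s:ℂ) - 1/(r:ℂ) := by push_cast; ring
  have hrr : (r:ℂ) * (r:ℂ)⁻¹ = 1 := mul_inv_cancel₀ hr0
  funext x
  have h1 := congrFun hpR x
  simp only [Pi.add_apply, Pi.smul_apply, smul_eq_mul] at h1
  simp only [Xop, opACom, Function.comp_apply, Pi.add_apply, Pi.smul_apply, smul_eq_mul,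
    Rop_apply, qOp_apply]
  rw [h1, hd]
  linear_combination (-(pOp (pOp v) x))*htt
    + (-(pOp (qOp v) x + (x:ℂ) * pOp v x))*htb
    + (-(((x:ℂ)*((x:ℂ)*v x))/(r:ℂ)))*hbb
    + (((x:ℂ)*(x:ℂ)*v x)*((((Real.sqrt r)⁻¹ : ℝ) : ℂ)*(((Real.sqrt r)⁻¹ : ℝ) : ℂ)))*hrr

lemma key (r s : ℝ) (hr : 0 < r) {u : ℝ → ℂ} (hu : ContDiff ℝ (⊤:ℕ∞) u) :
    Xop r s (Xop r s u)
      = (((s - 1/r : ℝ):ℂ)^2) • qOp (qOp (qOp (qOp u)))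
        + (2 * ((s - 1/r : ℝ):ℂ)) • qOp (Rop r (Rop r (qOp u)))
        + Rop r (Rop r (Rop r (Rop r u)))
        + (-(2 * ((r*s - 1 : ℝ):ℂ))) • u := by
  have hdu : Differentiable ℝ u := hu.differentiable (by simp)
  have hq := contDiff_qOp hu
  have hq2 := contDiff_qOp hq
  have hR := contDiff_Rop hu r
  have hR2 := contDiff_Rop hR r
  have hR3 := contDiff_Rop hR2 r
  have hRq2 := contDiff_Rop hq2 r
  have hXu : Xop r s u = Rop r (Rop r u) + ((s - 1/r : ℝ):ℂ) • qOp (qOp u) :=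
    X_apply r s hr hu
  have hXs : ContDiff ℝ (⊤:ℕ∞) (Xop r s u) := by
    rw [hXu]; exact contDiff_add' hR2 (contDiff_const_smul' _ hq2)
  have htt : ((Real.sqrt r : ℝ) : ℂ) * ((Real.sqrt r : ℝ) : ℂ) = (r:ℂ) := by
    norm_cast; exact Real.mul_self_sqrt hr.le
  have hr0 : (r:ℂ) ≠ 0 := by exact_mod_cast hr.ne'
  have hcc : ((-Complex.I) * ((Real.sqrt r : ℝ) : ℂ)) * ((-Complex.I) * ((Real.sqrt r : ℝ) : ℂ))
      = -(r:ℂ) := by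
    linear_combination (((Real.sqrt r : ℝ) : ℂ) * ((Real.sqrt r : ℝ) : ℂ))*Complex.I_sq - htt
  have hdr : ((s - 1/r : ℝ):ℂ) * (r:ℂ) = ((r*s - 1 : ℝ):ℂ) := by
    push_cast; field_simp
  rw [X_apply r s hr hXs, hXu,
    Rop_add (hR2.differentiable (by simp))
      (diff_const_smul _ (hq2.differentiable (by simp))) r,
    Rop_smul,
    Rop_add (hR3.differentiable (by simp))
      (diff_const_smul _ (hRq2.differentiable (by simp))) r,
    Rop_smul,
    qOp_add, qOp_smul, qOp_add, qOp_smul,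
    R2q r hq, R2q r hu, Rq r hdu,
    qOp_add, qOp_smul]
  funext x
  simp only [Pi.add_apply, Pi.smul_apply, smul_eq_mul]
  linear_combination (2*((s - 1/r : ℝ):ℂ)*(u x))*hcc + (-(2*(u x)))*hdr

lemma cont_smul' (c : ℂ) {v : ℝ → ℂ} (hv : Continuous v) : Continuous (c • v) := by
  have : c • v = fun y => c * v y := rfl
  rw [this]; exact continuous_const.mul hv

lemma cont_add' {v w : ℝ → ℂ} (hv : Continuous v) (hw : Continuous w) : Continuous (v + w) := by
  have : v + w = fun y => v y + w y := rfl
  rw [this]; exact hv.add hw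

lemma ip_smul (c : ℂ) (u v : ℝ → ℂ) : ip u (c • v) = c * ip u v := by
  unfold ip
  have h : (fun x => (starRingEnd ℂ) (u x) * (c • v) x)
      = fun x => c * ((starRingEnd ℂ) (u x) * v x) := by
    funext x; simp only [Pi.smul_apply, smul_eq_mul]; ring
  rw [h]
  simpa [smul_eq_mul] using integral_smul c (fun x => (starRingEnd ℂ) (u x) * v x)

lemma ip_add {u v w : ℝ → ℂ} (huc : Continuous u) (hus : HasCompactSupport u)
    (hv : Continuous v) (hw : Continuous w) : ip u (v + w) = ip u v + ip u w := by
  unfold ip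
  have hcu : Continuous fun x => (starRingEnd ℂ) (u x) := continuous_star.comp huc
  have hsu : HasCompactSupport fun x => (starRingEnd ℂ) (u x) :=
    hus.comp_left (by simp)
  have hiv : MeasureTheory.Integrable (fun x => (starRingEnd ℂ) (u x) * v x) :=
    (hcu.mul hv).integrable_of_hasCompactSupport hsu.mul_right
  have hiw : MeasureTheory.Integrable (fun x => (starRingEnd ℂ) (u x) * w x) :=
    (hcu.mul hw).integrable_of_hasCompactSupport hsu.mul_right
  simp only [Pi.add_apply, mul_add]
  exact MeasureTheory.integral_add hiv hiw


/-- `⟨u, X² u⟩ = (s − 1/r)² ⟨u, q⁴ u⟩ + 2(s − 1/r) ⟨u, q R² q u⟩ + ⟨u, R⁴ u⟩ − 2(rs − 1) ‖u‖²`. -/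
theorem X_sq_identity_R (r s : ℝ) (hr : 0 < r) (hs : 0 < s) (hrs : 1 < r * s)
    (u : ℝ → ℂ) (hu : IsTest u) :
    ip u (Xop r s (Xop r s u)) =
      ((s - 1/r : ℝ) : ℂ)^2 * ip u (qOp (qOp (qOp (qOp u))))
      + 2 * ((s - 1/r : ℝ) : ℂ) * ip u (qOp (Rop r (Rop r (qOp u))))
      + ip u (Rop r (Rop r (Rop r (Rop r u))))
      - 2 * ((r*s - 1 : ℝ) : ℂ) * ip u u := by
  obtain ⟨hsm, hcs⟩ := hu
  have huc := hsm.continuous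
  have hc1 : Continuous (qOp (qOp (qOp (qOp u)))) :=
    (contDiff_qOp (contDiff_qOp (contDiff_qOp (contDiff_qOp hsm)))).continuous
  have hc2 : Continuous (qOp (Rop r (Rop r (qOp u)))) :=
    (contDiff_qOp (contDiff_Rop (contDiff_Rop (contDiff_qOp hsm) r) r)).continuous
  have hc3 : Continuous (Rop r (Rop r (Rop r (Rop r u)))) :=
    (contDiff_Rop (contDiff_Rop (contDiff_Rop (contDiff_Rop hsm r) r) r) r).continuous
  rw [key r s hr hsm,
    ip_add huc hcs
      (cont_add' (cont_add' (cont_smul' _ hc1) (cont_smul' _ hc2)) hc3)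
      (cont_smul' _ huc),
    ip_add huc hcs (cont_add' (cont_smul' _ hc1) (cont_smul' _ hc2)) hc3,
    ip_add huc hcs (cont_smul' _ hc1) (cont_smul' _ hc2),
    ip_smul, ip_smul, ip_smul]
  ring
end
end

section
/- Let γ, D_qq, D_pq be real, D_pp > 0, and suppose the Lindblad quantity Δ := D_pp D_qq − D_pq² − γ²/4 satisfies Δ ≥ 0. Define on C_c^∞(ℝ,ℂ) the Lindblad operators L₁ = ((−2D_pq + iγ)/√(2D_pp)) p + √(2D_pp) q and L₂ = (2√Δ/√(2D_pp)) p. Then for every u ∈ C_c^∞(ℝ,ℂ): ‖L₁ u‖² + ‖L₂ u‖² = 2 D_qq ‖p u‖² − 2 D_pq ⟨u, (pq + qp) u⟩ + 2 D_pp ‖q u‖² − γ ‖u‖². Equivalently, −(1/2)(L₁*L₁ + L₂*L₂) agrees in the quadratic-form sense on C_c^∞(ℝ,ℂ) with G₀ = −D_qq p² + D_pq(pq + qp) − D_pp q² + γ/2. -/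
open MeasureTheory Complex
open scoped ComplexOrder

noncomputable section

/-- The first Lindblad operator `L₁ = ((−2D_pq + iγ)/√(2D_pp)) p + √(2D_pp) q`. -/
def L1op (γ Dpp Dpq : ℝ) : Op :=
  ((((-2*Dpq : ℝ) : ℂ) + Complex.I * (γ : ℂ)) / ((Real.sqrt (2*Dpp) : ℝ) : ℂ)) • pOp
  + ((Real.sqrt (2*Dpp) : ℝ) : ℂ) • qOp

/-- The second Lindblad operator `L₂ = (2√Δ/√(2D_pp)) p`, `Δ = D_pp D_qq − D_pq² − γ²/4`. -/
def L2op (γ Dpp Dqq Dpq : ℝ) : Op :=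
  ((2 * Real.sqrt (Dpp*Dqq - Dpq^2 - γ^2/4) / Real.sqrt (2*Dpp) : ℝ) : ℂ) • pOp

/-- `G₀ = −D_qq p² + D_pq (pq+qp) − D_pp q² + γ/2`. -/
def G0op (γ Dpp Dqq Dpq : ℝ) : Op := fun u =>
  (-(Dqq : ℂ)) • pOp (pOp u) + (Dpq : ℂ) • opACom pOp qOp u
  - (Dpp : ℂ) • qOp (qOp u) + ((γ/2 : ℝ) : ℂ) • u


section Aux

lemma testCont {u : ℝ → ℂ} (hu : IsTest u) : Continuous u := hu.1.continuous

lemma testDiff {u : ℝ → ℂ} (hu : IsTest u) : Differentiable ℝ u :=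
  hu.1.differentiable (by simp)

lemma isTest_deriv {u : ℝ → ℂ} (hu : IsTest u) : IsTest (deriv u) :=
  ⟨(contDiff_infty_iff_deriv.mp hu.1).2, hu.2.deriv⟩

lemma isTest_pOp {u : ℝ → ℂ} (hu : IsTest u) : IsTest (pOp u) := by
  refine ⟨contDiff_const.mul (isTest_deriv hu).1, ?_⟩
  exact ((isTest_deriv hu).2).mul_left

lemma isTest_qOp {u : ℝ → ℂ} (hu : IsTest u) : IsTest (qOp u) := by
  refine ⟨(Complex.ofRealCLM.contDiff).mul hu.1, hu.2.mul_left⟩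

lemma isTest_add {u v : ℝ → ℂ} (hu : IsTest u) (hv : IsTest v) : IsTest (u + v) :=
  ⟨hu.1.add hv.1, hu.2.add hv.2⟩

lemma integrable_conj_mul {u v : ℝ → ℂ} (hu : IsTest u) (hv : IsTest v) :
    Integrable (fun x => (starRingEnd ℂ) (u x) * v x) := by
  apply Continuous.integrable_of_hasCompactSupport
  · exact (Complex.continuous_conj.comp (testCont hu)).mul (testCont hv)
  · exact hv.2.mul_left

lemma ip_add_right {u v w : ℝ → ℂ} (hu : IsTest u) (hv : IsTest v) (hw : IsTest w) :
    ip u (fun x => v x + w x) = ip u v + ip u w := by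
  unfold ip
  rw [← integral_add (integrable_conj_mul hu hv) (integrable_conj_mul hu hw)]
  congr 1; ext x; ring

lemma ip_sub_right {u v w : ℝ → ℂ} (hu : IsTest u) (hv : IsTest v) (hw : IsTest w) :
    ip u v - ip u w = ip u (fun x => v x - w x) := by
  unfold ip
  rw [← integral_sub (integrable_conj_mul hu hv) (integrable_conj_mul hu hw)]
  congr 1; ext x; ring

lemma ip_smul_right (c : ℂ) (u v : ℝ → ℂ) :
    ip u (fun x => c * v x) = c * ip u v := by
  unfold ip
  rw [← integral_const_mul]
  congr 1; ext x; ring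

lemma ip_smul_left (c : ℂ) (u v : ℝ → ℂ) :
    ip (fun x => c * u x) v = (starRingEnd ℂ) c * ip u v := by
  unfold ip
  rw [← integral_const_mul]
  congr 1; ext x; simp only [map_mul]; ring

lemma integral_deriv_zero {f : ℝ → ℂ} (hf : ContDiff ℝ 1 f) (h2 : HasCompactSupport f) :
    ∫ x : ℝ, deriv f x = 0 := by
  have hint : Integrable (deriv f) :=
    ((hf.continuous_deriv le_rfl).integrable_of_hasCompactSupport h2.deriv)
  rw [← intervalIntegral.integral_Iic_add_Ioi (b := (0:ℝ)) hint.integrableOn hint.integrableOn,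
    HasCompactSupport.integral_Iic_deriv_eq hf h2 0,
    HasCompactSupport.integral_Ioi_deriv_eq hf h2 0]
  ring

lemma p_symm {u v : ℝ → ℂ} (hu : IsTest u) (hv : IsTest v) :
    ip (pOp u) v = ip u (pOp v) := by
  have hF : ContDiff ℝ 1 (fun x => (starRingEnd ℂ) (u x) * v x) := by
    have h1 : ContDiff ℝ 1 fun x => (starRingEnd ℂ) (u x) :=
      Complex.conjCLE.contDiff.comp (hu.1.of_le (by exact_mod_cast le_top))
    exact h1.mul (hv.1.of_le (by exact_mod_cast le_top))
  have hF2 : HasCompactSupport (fun x => (starRingEnd ℂ) (u x) * v x) := hv.2.mul_left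
  have hder : ∀ x : ℝ, deriv (fun x => (starRingEnd ℂ) (u x) * v x) x
      = (starRingEnd ℂ) (deriv u x) * v x + (starRingEnd ℂ) (u x) * deriv v x := by
    intro x
    have h1 : HasDerivAt (fun x => (starRingEnd ℂ) (u x)) ((starRingEnd ℂ) (deriv u x)) x :=
      ((testDiff hu) x).hasDerivAt.star
    exact (h1.mul ((testDiff hv) x).hasDerivAt).deriv
  have hzero : ∫ x : ℝ, ((starRingEnd ℂ) (deriv u x) * v x
      + (starRingEnd ℂ) (u x) * deriv v x) = 0 := by
    rw [← integral_deriv_zero hF hF2]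
    exact integral_congr_ae (Filter.Eventually.of_forall fun x => (hder x).symm)
  have hsplit : (∫ x : ℝ, (starRingEnd ℂ) (deriv u x) * v x)
      + ∫ x : ℝ, (starRingEnd ℂ) (u x) * deriv v x = 0 := by
    rw [← hzero]
    exact (integral_add (integrable_conj_mul (isTest_deriv hu) hv)
      (integrable_conj_mul hu (isTest_deriv hv))).symm
  unfold ip pOp
  have l1 : (∫ x : ℝ, (starRingEnd ℂ) (-Complex.I * deriv u x) * v x)
      = Complex.I * ∫ x : ℝ, (starRingEnd ℂ) (deriv u x) * v x := by
    rw [← integral_const_mul]; congr 1; ext x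
    simp [map_mul, Complex.conj_I]; ring
  have l2 : (∫ x : ℝ, (starRingEnd ℂ) (u x) * (-Complex.I * deriv v x))
      = -Complex.I * ∫ x : ℝ, (starRingEnd ℂ) (u x) * deriv v x := by
    rw [← integral_const_mul]; congr 1; ext x; ring
  rw [l1, l2]
  set A := ∫ x : ℝ, (starRingEnd ℂ) (deriv u x) * v x
  set B := ∫ x : ℝ, (starRingEnd ℂ) (u x) * deriv v x
  have hA : A = -B := by linear_combination hsplit
  rw [hA]; ring

lemma q_symm (u v : ℝ → ℂ) : ip (qOp u) v = ip u (qOp v) := by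
  unfold ip qOp
  congr 1; ext x
  simp [map_mul, Complex.conj_ofReal]; ring

lemma ip_expand (a b : ℂ) {f g : ℝ → ℂ} (hf : IsTest f) (hg : IsTest g) :
    ip (fun x => a * f x + b * g x) (fun x => a * f x + b * g x)
    = (starRingEnd ℂ) a * a * ip f f + (starRingEnd ℂ) a * b * ip f g
      + (starRingEnd ℂ) b * a * ip g f + (starRingEnd ℂ) b * b * ip g g := by
  have i1 := (integrable_conj_mul hf hf).const_mul ((starRingEnd ℂ) a * a)
  have i2 := (integrable_conj_mul hf hg).const_mul ((starRingEnd ℂ) a * b)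
  have i3 := (integrable_conj_mul hg hf).const_mul ((starRingEnd ℂ) b * a)
  have i4 := (integrable_conj_mul hg hg).const_mul ((starRingEnd ℂ) b * b)
  have i12 : Integrable (fun x => (starRingEnd ℂ) a * a * ((starRingEnd ℂ) (f x) * f x)
      + (starRingEnd ℂ) a * b * ((starRingEnd ℂ) (f x) * g x)) := i1.add i2
  have i123 : Integrable (fun x => ((starRingEnd ℂ) a * a * ((starRingEnd ℂ) (f x) * f x)
      + (starRingEnd ℂ) a * b * ((starRingEnd ℂ) (f x) * g x))
      + (starRingEnd ℂ) b * a * ((starRingEnd ℂ) (g x) * f x)) := i12.add i3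
  unfold ip
  rw [← integral_const_mul, ← integral_const_mul, ← integral_const_mul, ← integral_const_mul,
    ← integral_add i1 i2, ← integral_add i12 i3, ← integral_add i123 i4]
  congr 1; ext x
  simp only [map_add, map_mul]
  ring

lemma ip_expand4 (c1 c2 c3 c4 : ℂ) {u f1 f2 f3 f4 : ℝ → ℂ} (hu : IsTest u)
    (h1 : IsTest f1) (h2 : IsTest f2) (h3 : IsTest f3) (h4 : IsTest f4) :
    ip u (fun x => c1 * f1 x + c2 * f2 x - c3 * f3 x + c4 * f4 x)
    = c1 * ip u f1 + c2 * ip u f2 - c3 * ip u f3 + c4 * ip u f4 := by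
  have i1 := (integrable_conj_mul hu h1).const_mul c1
  have i2 := (integrable_conj_mul hu h2).const_mul c2
  have i3 := (integrable_conj_mul hu h3).const_mul c3
  have i4 := (integrable_conj_mul hu h4).const_mul c4
  have i12 : Integrable (fun x => c1 * ((starRingEnd ℂ) (u x) * f1 x)
      + c2 * ((starRingEnd ℂ) (u x) * f2 x)) := i1.add i2
  have i123 : Integrable (fun x => (c1 * ((starRingEnd ℂ) (u x) * f1 x)
      + c2 * ((starRingEnd ℂ) (u x) * f2 x)) - c3 * ((starRingEnd ℂ) (u x) * f3 x)) := i12.sub i3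
  unfold ip
  rw [← integral_const_mul, ← integral_const_mul, ← integral_const_mul, ← integral_const_mul,
    ← integral_add i1 i2, ← integral_sub i12 i3, ← integral_add i123 i4]
  congr 1; ext x
  ring

end Aux

/-- `‖L₁u‖² + ‖L₂u‖² = 2D_qq ‖pu‖² − 2D_pq ⟨u,(pq+qp)u⟩ + 2D_pp ‖qu‖² − γ ‖u‖²`;
equivalently `−(1/2)(L₁*L₁ + L₂*L₂)` agrees in the quadratic-form sense with `G₀`. -/
theorem lindblad_ops_quadratic_form (γ Dpp Dqq Dpq : ℝ) (hpp : 0 < Dpp)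
    (hΔ : 0 ≤ Dpp*Dqq - Dpq^2 - γ^2/4) (u : ℝ → ℂ) (hu : IsTest u) :
    ip (L1op γ Dpp Dpq u) (L1op γ Dpp Dpq u)
        + ip (L2op γ Dpp Dqq Dpq u) (L2op γ Dpp Dqq Dpq u)
      = ((2*Dqq : ℝ) : ℂ) * ip (pOp u) (pOp u)
        - ((2*Dpq : ℝ) : ℂ) * ip u (opACom pOp qOp u)
        + ((2*Dpp : ℝ) : ℂ) * ip (qOp u) (qOp u)
        - (γ : ℂ) * ip u u
    ∧ ip u (G0op γ Dpp Dqq Dpq u)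
      = -(1/2) * (ip (L1op γ Dpp Dpq u) (L1op γ Dpp Dpq u)
          + ip (L2op γ Dpp Dqq Dpq u) (L2op γ Dpp Dqq Dpq u)) := by
  have hf : IsTest (pOp u) := isTest_pOp hu
  have hg : IsTest (qOp u) := isTest_qOp hu
  have hpq : IsTest (pOp (qOp u)) := isTest_pOp hg
  have hqp : IsTest (qOp (pOp u)) := isTest_qOp hf
  have hpp' : IsTest (pOp (pOp u)) := isTest_pOp hf
  have hqq' : IsTest (qOp (qOp u)) := isTest_qOp hg
  have hAc : IsTest (opACom pOp qOp u) := isTest_add hpq hqp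
  set a : ℂ := (((-2*Dpq : ℝ) : ℂ) + Complex.I * (γ : ℂ)) / ((Real.sqrt (2*Dpp) : ℝ) : ℂ)
    with ha
  set b : ℂ := ((Real.sqrt (2*Dpp) : ℝ) : ℂ) with hb
  set c : ℂ := ((2 * Real.sqrt (Dpp*Dqq - Dpq^2 - γ^2/4) / Real.sqrt (2*Dpp) : ℝ) : ℂ) with hc
  set P := ip (pOp u) (pOp u) with hP
  set Q := ip (qOp u) (qOp u) with hQ
  set X := ip (pOp u) (qOp u) with hX
  set Y := ip (qOp u) (pOp u) with hY
  set N := ip u u with hN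
  set A := ip u (opACom pOp qOp u) with hA
  -- expansions of the two Lindblad quadratic forms
  have E1 : ip (L1op γ Dpp Dpq u) (L1op γ Dpp Dpq u)
      = (starRingEnd ℂ) a * a * P + (starRingEnd ℂ) a * b * X
        + (starRingEnd ℂ) b * a * Y + (starRingEnd ℂ) b * b * Q := by
    have : L1op γ Dpp Dpq u = fun x => a * pOp u x + b * qOp u x := rfl
    rw [this, ip_expand a b hf hg]
  have E2 : ip (L2op γ Dpp Dqq Dpq u) (L2op γ Dpp Dqq Dpq u)
      = (starRingEnd ℂ) c * c * P := by
    have : L2op γ Dpp Dqq Dpq u = fun x => c * pOp u x := rfl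
    rw [this, ip_smul_left, ip_smul_right]
    ring
  -- symmetry relations
  have hXu : X = ip u (pOp (qOp u)) := p_symm hu hg
  have hYu : Y = ip u (qOp (pOp u)) := q_symm u (pOp u)
  have hsum : X + Y = A := by
    rw [hXu, hYu, ← ip_add_right hu hpq hqp]
    rfl
  have hcomm : ∀ x : ℝ, pOp (qOp u) x - qOp (pOp u) x = -Complex.I * u x := by
    intro x
    have hd : deriv (qOp u) x = u x + x * deriv u x := by
      have h1 : HasDerivAt (fun y : ℝ => (y : ℂ)) 1 x := by
        simpa using (hasDerivAt_id x).ofReal_comp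
      have h2 : HasDerivAt (qOp u) (1 * u x + (x : ℂ) * deriv u x) x :=
        h1.mul ((testDiff hu) x).hasDerivAt
      simpa using h2.deriv
    rw [show pOp (qOp u) x = -Complex.I * deriv (qOp u) x from rfl, hd,
      show qOp (pOp u) x = (x : ℂ) * (-Complex.I * deriv u x) from rfl]
    ring
  have hdiff : X - Y = -Complex.I * N := by
    rw [hXu, hYu, ip_sub_right hu hpq hqp]
    have : ip u (fun x => pOp (qOp u) x - qOp (pOp u) x)
        = ip u (fun x => -Complex.I * u x) := by
      congr 1; ext x; exact hcomm x
    rw [this, ip_smul_right]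
  have hNN : N = Complex.I * (X - Y) := by
    rw [hdiff]
    linear_combination N * Complex.I_mul_I
  -- scalar computations
  have hDpp0 : (0:ℝ) ≤ 2*Dpp := by linarith
  have hsC : ((Real.sqrt (2*Dpp) : ℝ) : ℂ) ≠ 0 := by
    simp only [ne_eq, Complex.ofReal_eq_zero]
    positivity
  have hss : ((Real.sqrt (2*Dpp) : ℝ) : ℂ) * ((Real.sqrt (2*Dpp) : ℝ) : ℂ)
      = ((2*Dpp : ℝ) : ℂ) := by
    rw [← Complex.ofReal_mul, Real.mul_self_sqrt hDpp0]
  have c1 : (starRingEnd ℂ) a * a = (((4*Dpq^2 + γ^2)/(2*Dpp) : ℝ) : ℂ) := by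
    rw [ha, hb]
    simp only [map_div₀, map_add, map_mul, Complex.conj_ofReal, Complex.conj_I]
    rw [div_mul_div_comm, hss]
    push_cast
    rw [div_eq_div_iff (mul_ne_zero two_ne_zero (by exact_mod_cast hpp.ne'))
      (mul_ne_zero two_ne_zero (by exact_mod_cast hpp.ne'))]
    linear_combination (-(γ:ℂ)^2 * (2*(Dpp:ℂ))) * Complex.I_mul_I
  have c2 : (starRingEnd ℂ) a * b = ((-2*Dpq : ℝ) : ℂ) - Complex.I * γ := by
    rw [ha, hb]
    simp only [map_div₀, map_add, map_mul, Complex.conj_ofReal, Complex.conj_I]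
    rw [div_mul_cancel₀ _ hsC]
    ring
  have c3 : (starRingEnd ℂ) b * a = ((-2*Dpq : ℝ) : ℂ) + Complex.I * γ := by
    rw [ha, hb, Complex.conj_ofReal, mul_comm, div_mul_cancel₀ _ hsC]
  have c4 : (starRingEnd ℂ) b * b = ((2*Dpp : ℝ) : ℂ) := by
    rw [hb, Complex.conj_ofReal, hss]
  have c5 : (starRingEnd ℂ) c * c
      = ((4*(Dpp*Dqq - Dpq^2 - γ^2/4)/(2*Dpp) : ℝ) : ℂ) := by
    rw [hc, Complex.conj_ofReal, ← Complex.ofReal_mul]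
    congr 1
    rw [div_mul_div_comm, Real.mul_self_sqrt hDpp0]
    rw [mul_comm 2 (Real.sqrt _), mul_mul_mul_comm, Real.mul_self_sqrt hΔ]
    ring
  -- first statement
  have main1 : ip (L1op γ Dpp Dpq u) (L1op γ Dpp Dpq u)
        + ip (L2op γ Dpp Dqq Dpq u) (L2op γ Dpp Dqq Dpq u)
      = ((2*Dqq : ℝ) : ℂ) * P - ((2*Dpq : ℝ) : ℂ) * A + ((2*Dpp : ℝ) : ℂ) * Q
        - (γ : ℂ) * N := by
    rw [E1, E2, c1, c2, c3, c4, c5, ← hsum, hNN]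
    have hDppC : ((Dpp : ℝ) : ℂ) ≠ 0 := by
      simp only [ne_eq, Complex.ofReal_eq_zero]
      exact ne_of_gt hpp
    push_cast
    field_simp [hDppC]
    ring
  refine ⟨main1, ?_⟩
  -- second statement
  have hG : G0op γ Dpp Dqq Dpq u
      = fun x => (-(Dqq:ℂ)) * pOp (pOp u) x + (Dpq:ℂ) * opACom pOp qOp u x
        - (Dpp:ℂ) * qOp (qOp u) x + ((γ/2 : ℝ):ℂ) * u x := rfl
  have EG : ip u (G0op γ Dpp Dqq Dpq u)
      = (-(Dqq:ℂ)) * ip u (pOp (pOp u)) + (Dpq:ℂ) * A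
        - (Dpp:ℂ) * ip u (qOp (qOp u)) + ((γ/2 : ℝ):ℂ) * N := by
    rw [hG, ip_expand4 _ _ _ _ hu hpp' hAc hqq' hu]
  have hppP : ip u (pOp (pOp u)) = P := (p_symm hu hf).symm
  have hqqQ : ip u (qOp (qOp u)) = Q := (q_symm u (qOp u)).symm
  rw [EG, hppP, hqqQ, main1]
  push_cast
  ring
end
end
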